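/- The goal-driven unfolding preserves all minimal configurations: if E is a minimal configuration of a safe Petri net N reaching the goal g, and the ignored-transition sets Useless(e) are computed by a correct reduction procedure (one returning only transitions occurring in no minimal firing sequence from the given marking), then E is entirely contained in the event set E_gd of the goal-driven unfolding. -/

import Mathlib

structure PetriNet (P T : Type) where
  pre : T → Set P
  post : T → Set P
  M0 : Set P

namespace PetriNet

variable {P T : Type}

/-- The marking obtained by firing `t` from `M`. -/
def fire (N : PetriNet P T) (M : Set P) (t : T) : Set P :=
  (M \ N.pre t) ∪ N.post t

/-- `w` is a firing sequence (each transition enabled in turn) from `M`. -/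
def enabledSeq (N : PetriNet P T) : Set P → List T → Prop
  | _, [] => True
  | M, t :: w => N.pre t ⊆ M ∧ enabledSeq N (N.fire M t) w

/-- The marking reached after firing the word `w` from `M`. -/
def exec (N : PetriNet P T) : Set P → List T → Set P
  | M, [] => M
  | M, t :: w => exec N (N.fire M t) w

/-- The list `M0, M1, …, Mn` of markings visited by the word `w` from `M`. -/
def visited (N : PetriNet P T) : Set P → List T → List (Set P)
  | M, [] => [M]
  | M, t :: w => M :: visited N (N.fire M t) w

/-- `w` is a minimal firing sequence from `M` to goal `g`: it is a firing
sequence reaching `g` and no feasible permutation of it is cycling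
(visits the same marking twice). -/
def MinimalFrom (N : PetriNet P T) (M g : Set P) (w : List T) : Prop :=
  N.enabledSeq M w ∧ N.exec M w = g ∧
    ∀ w' : List T, w'.Perm w → N.enabledSeq M w' → (N.visited M w').Nodup

/-- `M` is reachable from the initial marking. -/
def Reach (N : PetriNet P T) (M : Set P) : Prop :=
  ∃ w : List T, N.enabledSeq N.M0 w ∧ N.exec N.M0 w = M

/-- Safety condition of the paper. -/
def Safe (N : PetriNet P T) : Prop :=
  ∀ M : Set P, N.Reach M → ∀ t : T, N.pre t ⊆ M →
    ∀ p ∈ M ∩ N.fire M t, p ∈ N.pre t ∩ N.post t ∨ p ∉ N.pre t ∪ N.post t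

/-- The reduced net `N \ U`: same places and initial marking,
transitions restricted to `T \ U`. -/
def restrict (N : PetriNet P T) (U : Set T) : PetriNet P {t : T // t ∉ U} where
  pre := fun t => N.pre t.1
  post := fun t => N.post t.1
  M0 := N.M0

end PetriNet

/-- An abstract unfolding of a Petri net: events labelled by transitions,
with a strict causality relation with finite pasts. -/
structure Unf (P T Ev : Type) where
  net : PetriNet P T
  lab : Ev → T
  lt : Ev → Ev → Prop
  lt_trans : ∀ a b c : Ev, lt a b → lt b c → lt a c
  lt_irrefl : ∀ e : Ev, ¬ lt e e
  finite_past : ∀ e : Ev, {e' | lt e' e}.Finite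

namespace Unf

variable {P T Ev : Type}

/-- The causal past `⌈e⌉` of an event, including `e` itself. -/
def past (U : Unf P T Ev) (e : Ev) : Set Ev := {e' | U.lt e' e} ∪ {e}

/-- `l` is a linearization of the set of events `C`: an enumeration of `C`
without repetition such that `e_i < e_j` implies `i < j`. -/
def IsLin (U : Unf P T Ev) (l : List Ev) (C : Set Ev) : Prop :=
  l.Nodup ∧ (∀ x, x ∈ l ↔ x ∈ C) ∧
    ∀ i j : Fin l.length, U.lt (l.get i) (l.get j) → (i : ℕ) < j

/-- `C` is a minimal configuration to the goal `g`: a causally closed set of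
events, `C = K(σ)` for some minimal firing sequence `σ` from `M0` to `g`. -/
def IsMinConfig (U : Unf P T Ev) (g : Set P) (C : Set Ev) : Prop :=
  (∀ e ∈ C, ∀ e' : Ev, U.lt e' e → e' ∈ C) ∧
    ∃ l : List Ev, U.IsLin l C ∧
      U.net.MinimalFrom U.net.M0 g (l.map U.lab)

end Unf

section Aux

variable {P T Ev : Type}

lemma exec_append' (N : PetriNet P T) (M : Set P) (w1 w2 : List T) :
    N.exec M (w1 ++ w2) = N.exec (N.exec M w1) w2 := by
  induction w1 generalizing M with
  | nil => rfl
  | cons t w ih => simp only [List.cons_append, List.append_eq, PetriNet.exec, ih]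

lemma enabledSeq_append' (N : PetriNet P T) (M : Set P) (w1 w2 : List T) :
    N.enabledSeq M (w1 ++ w2) ↔
      N.enabledSeq M w1 ∧ N.enabledSeq (N.exec M w1) w2 := by
  induction w1 generalizing M with
  | nil => simp [PetriNet.enabledSeq, PetriNet.exec]
  | cons t w ih =>
      simp only [List.cons_append, List.append_eq, PetriNet.enabledSeq, PetriNet.exec, ih, and_assoc]

lemma visited_ne_nil (N : PetriNet P T) (M : Set P) (w : List T) :
    N.visited M w ≠ [] := by
  cases w <;> simp [PetriNet.visited]

lemma visited_append' (N : PetriNet P T) (M : Set P) (w1 w2 : List T) :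
    N.visited M (w1 ++ w2) =
      (N.visited M w1).dropLast ++ N.visited (N.exec M w1) w2 := by
  induction w1 generalizing M with
  | nil => simp [PetriNet.visited, PetriNet.exec]
  | cons t w ih =>
      simp only [List.cons_append, List.append_eq, PetriNet.visited, PetriNet.exec, ih,
        List.dropLast_cons_of_ne_nil (visited_ne_nil N (N.fire M t) w), List.cons_append]

lemma isLin_iff (U : Unf P T Ev) (l : List Ev) (C : Set Ev) :
    U.IsLin l C ↔ l.Nodup ∧ (∀ x, x ∈ l ↔ x ∈ C) ∧
      l.Pairwise (fun a b => ¬ U.lt b a) := by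
  constructor
  · rintro ⟨h1, h2, h3⟩
    refine ⟨h1, h2, ?_⟩
    rw [List.pairwise_iff_get]
    intro i j hij hlt
    have := h3 j i hlt
    omega
  · rintro ⟨h1, h2, h3⟩
    refine ⟨h1, h2, ?_⟩
    intro i j hlt
    rcases lt_trichotomy (i : ℕ) (j : ℕ) with h | h | h
    · exact h
    · exfalso
      have : i = j := Fin.ext h
      subst this
      exact U.lt_irrefl _ hlt
    · exact absurd hlt (List.pairwise_iff_get.1 h3 j i h)

end Aux

/-- Theorem 1 of the paper: the goal-driven unfolding
preserves all minimal configurations. If `Useless` is computed by a correct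
reduction procedure (declaring useless only transitions occurring in no
minimal firing sequence from the given marking to `g`), then every minimal
configuration `E` of `N` reaching `g` is contained in the event set
`E_gd` of the goal-driven unfolding. -/
theorem stmt_14 {P T Ev : Type} (U : Unf P T Ev) (g : Set P)
    (E' : Set Ev) (mark : Set Ev → Set P)
    (uselessTrs : Set P → Set T → Set T) (Useless : Ev → Set T)
    -- any feasible linearization of a set of events reaches its marking
    (hmark : ∀ (C : Set Ev) (l : List Ev), U.IsLin l C →
      U.net.enabledSeq U.net.M0 (l.map U.lab) →
      U.net.exec U.net.M0 (l.map U.lab) = mark C)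
    -- in an unfolding, feasibility of linearizations of a given
    -- configuration does not depend on the chosen linearization
    (hfeas : ∀ (C : Set Ev) (l l' : List Ev), U.IsLin l C → U.IsLin l' C →
      U.net.enabledSeq U.net.M0 (l.map U.lab) →
      U.net.enabledSeq U.net.M0 (l'.map U.lab))
    -- definition of `Useless`
    (hU1 : ∀ e ∉ E',
      Useless e = ⋃ e' ∈ {e' : Ev | U.lt e' e}, Useless e')
    (hU2 : ∀ e ∈ E',
      Useless e = uselessTrs (mark (U.past e))
        (⋃ e' ∈ {e' : Ev | U.lt e' e}, Useless e'))
    -- `useless^g_M(I)` contains `I` …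
    (hI : ∀ (M : Set P) (I : Set T), I ⊆ uselessTrs M I)
    -- … and correctness: no transition of a minimal firing sequence (of the
    -- net already reduced by `I`) from `M` to `g` is declared useless
    (hcorrect : ∀ (M : Set P) (I : Set T) (w : List T),
      U.net.MinimalFrom M g w → (∀ t ∈ w, t ∉ I) →
      ∀ t ∈ w, t ∉ uselessTrs M I)
    (E : Set Ev) (hE : U.IsMinConfig g E) :
    -- E ⊆ E_gd, where E_gd = {e | ⌈e⌉ ∩ E_Ignored = ∅} and
    -- E_Ignored = {f | ∃ f' < f, lab f ∈ Useless f'}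
    E ⊆ {e : Ev | ∀ f ∈ U.past e,
      ¬ ∃ f' : Ev, U.lt f' f ∧ U.lab f ∈ Useless f'} := by
  classical
  obtain ⟨hcl, l, hlin, hminl⟩ := hE
  obtain ⟨hnd, hm, hpw⟩ := (isLin_iff U l E).1 hlin
  have hpastE : ∀ e ∈ E, U.past e ⊆ E := by
    intro e he x hx
    rcases hx with hx | hx
    · exact hcl e he x hx
    · rw [Set.mem_singleton_iff] at hx
      exact hx ▸ he
  have hfeasl : U.net.enabledSeq U.net.M0 (l.map U.lab) := hminl.1
  have hg : mark E = g := by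
    rw [← hmark E l hlin hfeasl]
    exact hminl.2.1
  -- key claim, by strong induction on the number of strict predecessors
  have key : ∀ n : ℕ, ∀ e' ∈ E, (U.finite_past e').toFinset.card = n →
      ∀ f ∈ E, f ∉ U.past e' → U.lab f ∉ Useless e' := by
    intro n
    induction n using Nat.strong_induction_on with
    | _ n ih =>
    intro e' he' hrank f hf hfpast
    have hIH : ∀ e'', U.lt e'' e' →
        ∀ fb ∈ E, fb ∉ U.past e'' → U.lab fb ∉ Useless e'' := by
      intro e'' hlt
      have hsub : (U.finite_past e'').toFinset ⊆ (U.finite_past e').toFinset := by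
        intro x hx
        rw [Set.Finite.mem_toFinset] at hx ⊢
        exact U.lt_trans _ _ _ hx hlt
      have hss : (U.finite_past e'').toFinset ⊂ (U.finite_past e').toFinset := by
        refine (Finset.ssubset_iff_of_subset hsub).2 ⟨e'', ?_, ?_⟩
        · rw [Set.Finite.mem_toFinset]; exact hlt
        · rw [Set.Finite.mem_toFinset]; exact U.lt_irrefl e''
      have hcard : (U.finite_past e'').toFinset.card < n :=
        hrank ▸ Finset.card_lt_card hss
      exact ih _ hcard e'' (hcl e' he' e'' hlt) rfl
    have hpast_mono : ∀ fb : Ev, fb ∉ U.past e' → ∀ e'', U.lt e'' e' →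
        fb ∉ U.past e'' := by
      intro fb hfb e'' hlt hp
      apply hfb
      rcases hp with hp | hp
      · exact Or.inl (U.lt_trans _ _ _ hp hlt)
      · rw [Set.mem_singleton_iff] at hp
        exact Or.inl (hp ▸ hlt)
    by_cases hE'mem : e' ∈ E'
    · -- the reduction is invoked at `e'`
      set A := l.filter (fun x => decide (x ∈ U.past e')) with hAdef
      set B := l.filter (fun x => !decide (x ∈ U.past e')) with hBdef
      have hABperm : (A ++ B).Perm l :=
        List.filter_append_perm (fun x => decide (x ∈ U.past e')) l
      have hndAB : (A ++ B).Nodup := hABperm.nodup_iff.2 hnd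
      have hmemAB : ∀ x, x ∈ A ++ B ↔ x ∈ E := fun x =>
        (hABperm.mem_iff).trans (hm x)
      have hpwAB : (A ++ B).Pairwise (fun a b => ¬ U.lt b a) := by
        rw [List.pairwise_append]
        refine ⟨hpw.sublist List.filter_sublist, hpw.sublist List.filter_sublist, ?_⟩
        intro a ha b hb hba
        rw [hAdef, List.mem_filter] at ha
        rw [hBdef, List.mem_filter] at hb
        have hapast : a ∈ U.past e' := by simpa using ha.2
        have hbnp : b ∉ U.past e' := by simpa using hb.2
        apply hbnp
        rcases hapast with h | h
        · exact Or.inl (U.lt_trans _ _ _ hba h)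
        · rw [Set.mem_singleton_iff] at h
          exact Or.inl (h ▸ hba)
      have hlinAB : U.IsLin (A ++ B) E :=
        (isLin_iff U _ E).2 ⟨hndAB, hmemAB, hpwAB⟩
      have hfeasAB : U.net.enabledSeq U.net.M0 ((A ++ B).map U.lab) :=
        hfeas E l (A ++ B) hlin hlinAB hfeasl
      have hmapAB : (A ++ B).map U.lab = A.map U.lab ++ B.map U.lab :=
        List.map_append
      rw [hmapAB] at hfeasAB
      obtain ⟨hfA, hfB⟩ := (enabledSeq_append' U.net U.net.M0 _ _).1 hfeasAB
      have hlinA : U.IsLin A (U.past e') := by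
        refine (isLin_iff U _ _).2 ⟨hnd.sublist List.filter_sublist, ?_,
          hpw.sublist List.filter_sublist⟩
        intro x
        rw [hAdef, List.mem_filter]
        constructor
        · intro hx
          simpa using hx.2
        · intro hx
          exact ⟨(hm x).2 (hpastE e' he' hx), by simpa using hx⟩
      have hMA : U.net.exec U.net.M0 (A.map U.lab) = mark (U.past e') :=
        hmark _ _ hlinA hfA
      have hexecB : U.net.exec (mark (U.past e')) (B.map U.lab) = g := by
        rw [← hMA, ← exec_append', ← hmapAB]
        rw [hmark E (A ++ B) hlinAB (by rw [hmapAB]; exact (enabledSeq_append' _ _ _ _).2 ⟨hfA, hfB⟩)]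
        exact hg
      have hminB : U.net.MinimalFrom (mark (U.past e')) g (B.map U.lab) := by
        refine ⟨hMA ▸ hfB, hexecB, ?_⟩
        intro w'' hperm hen
        have hen2 : U.net.enabledSeq (U.net.exec U.net.M0 (A.map U.lab)) w'' := by
          rw [hMA]; exact hen
        have hen' : U.net.enabledSeq U.net.M0 (A.map U.lab ++ w'') :=
          (enabledSeq_append' _ _ _ _).2 ⟨hfA, hen2⟩
        have hperm' : (A.map U.lab ++ w'').Perm (l.map U.lab) :=
          ((hperm.append_left (A.map U.lab)).trans
            (by rw [← hmapAB])).trans (hABperm.map U.lab)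
        have hnodup := hminl.2.2 _ hperm' hen'
        rw [visited_append'] at hnodup
        have := (List.nodup_append.1 hnodup).2.1
        rw [hMA] at this
        exact this
      rw [hU2 e' hE'mem]
      intro hmem
      have hfBmem : U.lab f ∈ B.map U.lab := by
        apply List.mem_map_of_mem
        rw [hBdef, List.mem_filter]
        exact ⟨(hm f).2 hf, by simpa using hfpast⟩
      have hnotI : ∀ t ∈ B.map U.lab,
          t ∉ ⋃ e'' ∈ {x : Ev | U.lt x e'}, Useless e'' := by
        intro t ht hti
        simp only [Set.mem_iUnion, Set.mem_setOf_eq] at hti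
        obtain ⟨e'', hlt, hti⟩ := hti
        obtain ⟨fb, hfb, rfl⟩ := List.mem_map.1 ht
        rw [hBdef, List.mem_filter] at hfb
        have hfbE : fb ∈ E := (hm fb).1 hfb.1
        have hfbnp : fb ∉ U.past e' := by simpa using hfb.2
        exact hIH e'' hlt fb hfbE (hpast_mono fb hfbnp e'' hlt) hti
      exact hcorrect _ _ _ hminB hnotI _ hfBmem hmem
    · -- the reduction is not invoked at `e'`
      rw [hU1 e' hE'mem]
      intro hmem
      simp only [Set.mem_iUnion, Set.mem_setOf_eq] at hmem
      obtain ⟨e'', hlt, hmem⟩ := hmem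
      exact hIH e'' hlt f hf (hpast_mono f hfpast e'' hlt) hmem
  -- conclude
  intro e he
  simp only [Set.mem_setOf_eq]
  intro f hfp
  rintro ⟨f', hlt, hmem⟩
  have hfE : f ∈ E := hpastE e he hfp
  have hf'E : f' ∈ E := hcl f hfE f' hlt
  have hfnp : f ∉ U.past f' := by
    intro hp
    rcases hp with hp | hp
    · exact U.lt_irrefl f (U.lt_trans _ _ _ hp hlt)
    · rw [Set.mem_singleton_iff] at hp
      exact U.lt_irrefl f' (hp ▸ hlt)
  exact key _ f' hf'E rfl f hfE hfnp hmem
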